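/- Let 0 ≤ r₀ < r₁ and let (A, w) be an EYM solution on (r₀, r₁) with A(r) > 0 for all r ∈ (r₀, r₁). If there exists ρ ∈ (r₀, r₁) such that A(ρ) ≥ 1 − Λ·ρ²/3, then A(r) converges in the extended real numbers as r → r₀⁺, and its limit is greater than or equal to 1 − Λ·r₀²/3. -/

import Mathlib

open Filter Topology Set

/-- The quantity Φ(r) = 1 − A(r) − (1 − w(r)²)²/r² − Λ·r². -/
noncomputable def Phi (Λ : ℝ) (A w : ℝ → ℝ) (r : ℝ) : ℝ :=
  1 - A r - (1 - (w r) ^ 2) ^ 2 / r ^ 2 - Λ * r ^ 2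

/-- `(A, w)` is a static spherically symmetric Einstein SU(2)-Yang–Mills
solution with cosmological constant `Λ` on the set `I`. -/
def IsEYM (Λ : ℝ) (A w : ℝ → ℝ) (I : Set ℝ) : Prop :=
  (∀ r ∈ I, DifferentiableAt ℝ A r) ∧
  (∀ r ∈ I, DifferentiableAt ℝ w r) ∧
  (∀ r ∈ I, DifferentiableAt ℝ (deriv w) r) ∧
  (∀ r ∈ I, r * deriv A r + 2 * A r * (deriv w r) ^ 2 = Phi Λ A w r) ∧
  (∀ r ∈ I, r ^ 2 * A r * deriv (deriv w) r + r * Phi Λ A w r * deriv w r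
      + w r * (1 - (w r) ^ 2) = 0)

/-- if `A > 0` on `(r₀, r₁)` and `A(ρ) ≥ 1 − Λρ²/3` for some
`ρ ∈ (r₀, r₁)`, then `A` converges in the extended reals as `r → r₀⁺`, to a
limit `≥ 1 − Λ r₀²/3`. -/
theorem stmt_8 (Λ r₀ r₁ : ℝ) (A w : ℝ → ℝ)
    (hr₀ : 0 ≤ r₀) (hr₁ : r₀ < r₁)
    (hEYM : IsEYM Λ A w (Ioo r₀ r₁))
    (hApos : ∀ r ∈ Ioo r₀ r₁, 0 < A r)
    (ρ : ℝ) (hρ : ρ ∈ Ioo r₀ r₁) (hAρ : A ρ ≥ 1 - Λ * ρ ^ 2 / 3) :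
    Filter.liminf (fun r => (A r : EReal)) (𝓝[>] r₀) =
      Filter.limsup (fun r => (A r : EReal)) (𝓝[>] r₀) ∧
    ((1 - Λ * r₀ ^ 2 / 3 : ℝ) : EReal) ≤
      Filter.limsup (fun r => (A r : EReal)) (𝓝[>] r₀) := by
  obtain ⟨hA, hw, hw', heq1, heq2⟩ := hEYM
  set f : ℝ → ℝ := fun r => r * A r - r + Λ * r ^ 3 / 3 with hf
  -- f is differentiable with nonpositive derivative on Ioo r₀ r₁
  have hfderiv : ∀ x ∈ Ioo r₀ r₁,
      HasDerivAt f (A x + x * deriv A x - 1 + Λ * x ^ 2) x := by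
    intro x hx
    have h1 : HasDerivAt (fun r : ℝ => r * A r) (1 * A x + x * deriv A x) x :=
      (hasDerivAt_id x).mul ((hA x hx).hasDerivAt)
    have h2 : HasDerivAt (fun r : ℝ => Λ * r ^ 3 / 3) (Λ * (3 * x ^ 2) / 3) x := by
      have := ((hasDerivAt_pow 3 x).const_mul Λ).div_const 3
      simpa using this
    have := (h1.sub (hasDerivAt_id x)).add h2
    refine this.congr_deriv ?_
    ring
  have hderiv_nonpos : ∀ x ∈ Ioo r₀ r₁, deriv f x ≤ 0 := by
    intro x hx
    have hx0 : 0 < x := lt_of_le_of_lt hr₀ hx.1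
    have hd := (hfderiv x hx).deriv
    rw [hd]
    have h1 := heq1 x hx
    have hxA : x * deriv A x = Phi Λ A w x - 2 * A x * (deriv w x) ^ 2 := by
      linarith
    rw [hxA, Phi]
    have h2 : 0 ≤ (1 - (w x) ^ 2) ^ 2 / x ^ 2 := by positivity
    have h3 : 0 ≤ 2 * A x * (deriv w x) ^ 2 := by
      have := (hApos x hx).le
      positivity
    nlinarith
  have hfcont : ContinuousOn f (Ioo r₀ r₁) := by
    intro x hx
    exact ((hfderiv x hx).continuousAt).continuousWithinAt
  have hfanti : AntitoneOn f (Ioo r₀ r₁) := by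
    apply antitoneOn_of_deriv_nonpos (convex_Ioo r₀ r₁) hfcont
    · intro x hx
      rw [interior_Ioo] at hx
      exact (hfderiv x hx).differentiableAt.differentiableWithinAt
    · intro x hx
      rw [interior_Ioo] at hx
      exact hderiv_nonpos x hx
  have hρ0 : 0 < ρ := lt_of_le_of_lt hr₀ hρ.1
  have hfρ : 0 ≤ f ρ := by
    have : f ρ = ρ * (A ρ - (1 - Λ * ρ ^ 2 / 3)) := by rw [hf]; ring
    rw [this]
    have := sub_nonneg.mpr hAρ
    positivity
  have hfnonneg : ∀ x ∈ Ioo r₀ ρ, 0 ≤ f x := by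
    intro x hx
    exact le_trans hfρ (hfanti ⟨hx.1, hx.2.trans hρ.2⟩ hρ hx.2.le)
  -- g = f / r is antitone and nonneg on Ioo r₀ ρ
  set g : ℝ → ℝ := fun r => f r / r with hg
  have hganti : AntitoneOn g (Ioo r₀ ρ) := by
    intro x hx y hy hxy
    have hx0 : 0 < x := lt_of_le_of_lt hr₀ hx.1
    have hy0 : 0 < y := lt_of_le_of_lt hr₀ hy.1
    have h1 : f y / y ≤ f y / x :=
      div_le_div_of_nonneg_left (hfnonneg y hy) hx0 hxy
    have h2 : f y / x ≤ f x / x := by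
      gcongr
      exact hfanti ⟨hx.1, hx.2.trans hρ.2⟩ ⟨hy.1, hy.2.trans hρ.2⟩ hxy
    exact h1.trans h2
  have hgnonneg : ∀ x ∈ Ioo r₀ ρ, 0 ≤ g x := by
    intro x hx
    have hx0 : 0 < x := lt_of_le_of_lt hr₀ hx.1
    exact div_nonneg (hfnonneg x hx) hx0.le
  -- A = g + (1 - Λ r²/3) eventually on 𝓝[>] r₀
  have hIoo_mem : Ioo r₀ ρ ∈ 𝓝[>] r₀ := Ioo_mem_nhdsGT_of_mem ⟨le_refl _, hρ.1⟩
  have hAeq : ∀ x ∈ Ioo r₀ ρ, A x = g x + (1 - Λ * x ^ 2 / 3) := by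
    intro x hx
    have hx0 : 0 < x := lt_of_le_of_lt hr₀ hx.1
    rw [hg, hf]
    field_simp
    ring
  have hne : (Ioo r₀ ρ).Nonempty := nonempty_Ioo.mpr hρ.1
  have hpoly : Tendsto (fun x : ℝ => 1 - Λ * x ^ 2 / 3) (𝓝[>] r₀)
      (𝓝 (1 - Λ * r₀ ^ 2 / 3)) := by
    apply Tendsto.mono_left ?_ nhdsWithin_le_nhds
    exact (Continuous.tendsto (continuous_const.sub ((continuous_const.mul (continuous_pow 2)).div_const 3)) r₀)
  have key : ∃ L : EReal, Tendsto (fun r => (A r : EReal)) (𝓝[>] r₀) (𝓝 L) ∧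
      ((1 - Λ * r₀ ^ 2 / 3 : ℝ) : EReal) ≤ L := by
    by_cases hbdd : BddAbove (g '' Ioo r₀ ρ)
    · -- bounded case: real limit
      have hgt := hganti.tendsto_nhdsWithin_Ioo_right hne hbdd
      set S := sSup (g '' Ioo r₀ ρ) with hS
      have hS0 : 0 ≤ S := by
        obtain ⟨x, hx⟩ := hne
        exact le_trans (hgnonneg x hx) (le_csSup hbdd ⟨x, hx, rfl⟩)
      have hAt : Tendsto A (𝓝[>] r₀) (𝓝 (S + (1 - Λ * r₀ ^ 2 / 3))) := by
        apply Tendsto.congr' ?_ (hgt.add hpoly)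
        filter_upwards [hIoo_mem] with x hx
        exact (hAeq x hx).symm
      refine ⟨((S + (1 - Λ * r₀ ^ 2 / 3) : ℝ) : EReal), ?_, ?_⟩
      · exact EReal.tendsto_coe.mpr hAt
      · exact_mod_cast by linarith
    · -- unbounded case: limit ⊤
      refine ⟨⊤, ?_, le_top⟩
      rw [EReal.tendsto_nhds_top_iff_real]
      intro M
      rw [not_bddAbove_iff] at hbdd
      obtain ⟨y, ⟨x, hx, rfl⟩, hxM⟩ := hbdd (M + |Λ| * ρ ^ 2 / 3)
      have hmem : Ioo r₀ x ∈ 𝓝[>] r₀ := Ioo_mem_nhdsGT_of_mem ⟨le_refl _, hx.1⟩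
      filter_upwards [hmem] with z hz
      have hzρ : z ∈ Ioo r₀ ρ := ⟨hz.1, hz.2.trans hx.2⟩
      have hgz : g x ≤ g z := hganti hzρ hx hz.2.le
      have hz0 : 0 < z := lt_of_le_of_lt hr₀ hz.1
      have hzb : z ^ 2 ≤ ρ ^ 2 := by nlinarith [hzρ.2]
      have hbound : -(|Λ| * ρ ^ 2 / 3) ≤ -(Λ * z ^ 2 / 3) := by
        have h1 : Λ * z ^ 2 ≤ |Λ| * ρ ^ 2 := by
          calc Λ * z ^ 2 ≤ |Λ| * z ^ 2 := by
                nlinarith [le_abs_self Λ, sq_nonneg z]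
            _ ≤ |Λ| * ρ ^ 2 := by nlinarith [abs_nonneg Λ]
        linarith
      have := hAeq z hzρ
      rw [EReal.coe_lt_coe_iff]
      rw [this]
      nlinarith
  obtain ⟨L, hL, hLge⟩ := key
  have h1 : Filter.liminf (fun r => (A r : EReal)) (𝓝[>] r₀) = L := hL.liminf_eq
  have h2 : Filter.limsup (fun r => (A r : EReal)) (𝓝[>] r₀) = L := hL.limsup_eq
  rw [h1, h2]
  exact ⟨rfl, hLge⟩
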